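/- Let N ≥ 2 be an even integer. Then I_N(R₁,R₂) ≍ (R₁R₂)^{N²/4} as R₁R₂ → ∞; that is, there exist constants C₁, C₂ > 0 and T > 1 such that for all R₁, R₂ > 0 with R₁R₂ ≥ T, one has C₁ ≤ I_N(R₁,R₂) / (R₁R₂)^{N²/4} ≤ C₂. -/

import Mathlib

open MeasureTheory Real Finset

private lemma sum_odds (M : ℕ) : ∑ j ∈ Finset.range M, (2*j+1) = M^2 := by
  induction M with
  | zero => simp
  | succ n ih => rw [Finset.sum_range_succ, ih]; ring

private noncomputable def aSeq (M : ℕ) (R₁ R₂ : ℝ) : ℕ → ℝ :=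
  fun j => if j < M then R₁ * (4:ℝ)⁻¹ ^ (j+1) else 2 * 4 ^ (2*M - 1 - j) / R₂

section aSeq
variable {M : ℕ} {R₁ R₂ : ℝ}

private lemma aSeq_pos (h₁ : 0 < R₁) (h₂ : 0 < R₂) (j : ℕ) : 0 < aSeq M R₁ R₂ j := by
  unfold aSeq; split <;> positivity

private lemma aSeq_step (h₂ : 0 < R₂) (hQ : 2 * 4 ^ (2*M) ≤ R₁ * R₂)
    (j : ℕ) (hj : j + 1 < 2*M) :
    4 * aSeq M R₁ R₂ (j+1) ≤ aSeq M R₁ R₂ j := by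
  unfold aSeq
  rcases lt_trichotomy (j+1) M with h | h | h
  · rw [if_pos h, if_pos (show j < M by omega)]
    apply le_of_eq
    rw [pow_succ]
    field_simp
  · rw [if_neg (show ¬ (j+1 < M) by omega), if_pos (show j < M by omega)]
    have e2 : 2*M - 1 - (j+1) = M - 1 := by omega
    have e1 : j + 1 = M := h
    rw [e2, e1]
    have hp : (0:ℝ) < (4:ℝ)^M := by positivity
    have key : (8:ℝ) * 4^(M-1) * 4^M ≤ R₁ * R₂ := by
      obtain ⟨k, hk⟩ : ∃ k, M = k+1 := ⟨M-1, by omega⟩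
      have : (2:ℝ) * 4^(2*M) = 8 * 4^(M-1) * 4^M := by
        subst hk
        rw [show (k+1)-1 = k from rfl, two_mul, pow_add, pow_succ]
        ring
      linarith [hQ]
    rw [show (4:ℝ) * (2 * 4^(M-1)/R₂) = 8 * 4^(M-1) / R₂ by ring,
        div_le_iff₀ h₂,
        show R₁ * (4:ℝ)⁻¹^M * R₂ = R₁*R₂/4^M by rw [inv_pow]; ring,
        le_div_iff₀ hp]
    linarith [key]
  · rw [if_neg (show ¬ (j+1 < M) by omega), if_neg (show ¬ (j < M) by omega)]
    have e : 2*M - 1 - j = (2*M - 1 - (j+1)) + 1 := by omega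
    rw [e, pow_succ]
    apply le_of_eq
    ring

private lemma aSeq_anti (h₁ : 0 < R₁) (h₂ : 0 < R₂) (hQ : 2 * 4 ^ (2*M) ≤ R₁ * R₂)
    {i j : ℕ} (hij : i ≤ j) (hj : j < 2*M) :
    aSeq M R₁ R₂ j ≤ aSeq M R₁ R₂ i := by
  induction j with
  | zero => simp_all
  | succ n ih =>
    rcases Nat.eq_or_lt_of_le hij with rfl | hlt
    · exact le_refl _
    · have h1 : aSeq M R₁ R₂ (n+1) ≤ aSeq M R₁ R₂ n := by
        have := aSeq_step h₂ hQ n hj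
        nlinarith [aSeq_pos h₁ h₂ (M:=M) (R₁:=R₁) (R₂:=R₂) (n+1)]
      exact le_trans h1 (ih (by omega) (by omega))

private lemma aSeq_chain (h₁ : 0 < R₁) (h₂ : 0 < R₂) (hQ : 2 * 4 ^ (2*M) ≤ R₁ * R₂)
    {i j : ℕ} (hij : i < j) (hj : j < 2*M) :
    4 * aSeq M R₁ R₂ j ≤ aSeq M R₁ R₂ i := by
  have hstep := aSeq_step h₂ hQ (j-1) (by omega)
  rw [show (j-1)+1 = j from by omega] at hstep
  exact le_trans hstep (aSeq_anti h₁ h₂ hQ (by omega) (by omega))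

end aSeq

section sets
variable {M : ℕ} {R₁ R₂ : ℝ}

private lemma P_subset_S (hM : 1 ≤ M) (h₁ : 0 < R₁) (h₂ : 0 < R₂)
    (hQ : 2 * 4 ^ (2*M) ≤ R₁ * R₂) :
    (Set.pi Set.univ fun j : Fin (2*M) =>
        Set.Icc (aSeq M R₁ R₂ (j:ℕ)) (2 * aSeq M R₁ R₂ (j:ℕ))) ⊆
      {σ : Fin (2*M) → ℝ | (∀ i, 1 / R₂ < σ i ∧ σ i < R₁) ∧
        ∀ i j : Fin (2*M), i < j → σ j < σ i} := by
  intro σ hσ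
  simp only [Set.mem_pi, Set.mem_univ, forall_true_left, Set.mem_Icc] at hσ
  have apos : ∀ j : ℕ, 0 < aSeq M R₁ R₂ j := aSeq_pos h₁ h₂
  constructor
  · intro i
    have hi : (i:ℕ) < 2*M := i.isLt
    constructor
    · have hlast : aSeq M R₁ R₂ (2*M-1) = 2 / R₂ := by
        unfold aSeq
        rw [if_neg (show ¬ (2*M-1 < M) by omega), show 2*M-1-(2*M-1) = 0 from by omega]
        norm_num
      have h1 : aSeq M R₁ R₂ (2*M-1) ≤ aSeq M R₁ R₂ (i:ℕ) :=
        aSeq_anti h₁ h₂ hQ (by omega) (by omega)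
      have h2 : (1:ℝ)/R₂ < 2/R₂ := by
        rw [div_lt_div_iff₀ h₂ h₂]; nlinarith
      have := (hσ i).1
      rw [hlast] at h1
      linarith
    · have h0 : aSeq M R₁ R₂ 0 = R₁ * 4⁻¹ := by
        unfold aSeq; rw [if_pos (show 0 < M by omega)]; norm_num
      have h1 : aSeq M R₁ R₂ (i:ℕ) ≤ aSeq M R₁ R₂ 0 :=
        aSeq_anti h₁ h₂ hQ (by omega) i.isLt
      have := (hσ i).2
      nlinarith
  · intro i j hij
    have hij' : (i:ℕ) < (j:ℕ) := hij
    have hchain := aSeq_chain h₁ h₂ hQ hij' j.isLt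
    have h1 := (hσ i).1
    have h2 := (hσ j).2
    have := apos (i:ℕ)
    nlinarith
end sets

section flower
variable {M : ℕ} {R₁ R₂ : ℝ}

private lemma f_lower (hM : 1 ≤ M) (h₁ : 0 < R₁) (h₂ : 0 < R₂)
    (hQ : 2 * 4 ^ (2*M) ≤ R₁ * R₂) {σ : Fin (2*M) → ℝ}
    (hσ : σ ∈ Set.pi Set.univ fun j : Fin (2*M) =>
        Set.Icc (aSeq M R₁ R₂ (j:ℕ)) (2 * aSeq M R₁ R₂ (j:ℕ))) :
    (∏ l : Fin (2*M), ((2 * aSeq M R₁ R₂ (l:ℕ))^(2*M))⁻¹) *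
      ∏ j : Fin (2*M), ∏ k ∈ Finset.Ioi j, ((3:ℝ)/4 * (aSeq M R₁ R₂ (j:ℕ))^2) ≤
    (∏ l, ((σ l) ^ (2*M))⁻¹) *
      ∏ j : Fin (2*M), ∏ k ∈ Finset.Ioi j, ((σ j) ^ 2 - (σ k) ^ 2) := by
  simp only [Set.mem_pi, Set.mem_univ, forall_true_left, Set.mem_Icc] at hσ
  have apos : ∀ j : ℕ, 0 < aSeq M R₁ R₂ j := aSeq_pos h₁ h₂
  have hσpos : ∀ l, 0 < σ l := fun l => lt_of_lt_of_le (apos _) (hσ l).1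
  apply mul_le_mul
  · apply Finset.prod_le_prod
    · intro l _
      have := apos (l:ℕ); positivity
    · intro l _
      apply inv_anti₀
      · have := hσpos l; positivity
      · exact pow_le_pow_left₀ (le_of_lt (hσpos l)) (hσ l).2 _
  · apply Finset.prod_le_prod
    · intro j _
      apply Finset.prod_nonneg
      intro k _
      have := apos (j:ℕ); positivity
    · intro j _
      apply Finset.prod_le_prod
      · intro k _
        have := apos (j:ℕ); positivity
      · intro k hk
        have hjk : (j:ℕ) < (k:ℕ) := Fin.lt_def.mp (Finset.mem_Ioi.mp hk)
        have hchain := aSeq_chain h₁ h₂ hQ hjk k.isLt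
        have h1 := (hσ j).1
        have h2 := (hσ k).2
        have h3 := (hσ k).1
        have := apos (j:ℕ); have := apos (k:ℕ)
        nlinarith
  · apply Finset.prod_nonneg; intro j _
    apply Finset.prod_nonneg; intro k _
    have := apos (j:ℕ); positivity
  · apply Finset.prod_nonneg; intro l _
    have := hσpos l; positivity
end flower

private lemma pow_merge (x : ℝ) (hx : 0 < x) {c N e : ℕ} (h : 2*c+1 = e + N) (w : ℝ) :
    ((2*(x*w))^N)⁻¹ * ((3/4*(x*w)^2)^c) * (x*w)
      = ((((2*w)^N)⁻¹ * (3/4*w^2)^c) * w) * x^e := by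
  have hx' : x ≠ 0 := ne_of_gt hx
  have key : x^(2*c) * x * ((x^N)⁻¹) = x^e := by
    rw [← pow_succ, show 2*c+1 = e+N from h, pow_add,
      mul_inv_cancel_right₀ (pow_ne_zero _ hx')]
  rw [show (2*(x*w))^N = (2*w)^N * x^N by ring,
      show (3/4*(x*w)^2)^c = (3/4*w^2)^c * x^(2*c) by ring,
      mul_inv, ← key]
  ring

private lemma pow_merge' (x : ℝ) (hx : 0 < x) {c N e : ℕ} (h : 2*c+1+e = N) (w : ℝ) :
    ((2*(x⁻¹*w))^N)⁻¹ * ((3/4*(x⁻¹*w)^2)^c) * (x⁻¹*w)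
      = ((((2*w)^N)⁻¹ * (3/4*w^2)^c) * w) * x^e := by
  have hx' : x ≠ 0 := ne_of_gt hx
  have key : (x⁻¹)^(2*c) * x⁻¹ * (((x⁻¹)^N)⁻¹) = x^e := by
    have hN : x^N = x^(2*c) * x * x^e := by
      rw [← h, pow_add, pow_succ]
    rw [inv_pow, inv_pow, inv_inv, hN]
    field_simp
  rw [show (2*(x⁻¹*w))^N = (2*w)^N * (x⁻¹)^N by ring,
      show (3/4*(x⁻¹*w)^2)^c = (3/4*w^2)^c * (x⁻¹)^(2*c) by ring,
      mul_inv, ← key]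
  ring

private lemma sum_odds2 (M : ℕ) : ∑ j ∈ Finset.range M, (2*j+1) = M^2 := by
  induction M with
  | zero => simp
  | succ n ih => rw [Finset.sum_range_succ, ih]; ring

private noncomputable def kap (M j : ℕ) : ℝ :=
  (((2*((4:ℝ)⁻¹^(j+1)))^(2*M))⁻¹ * (3/4*((4:ℝ)⁻¹^(j+1))^2)^(2*M-1-j)) * ((4:ℝ)⁻¹^(j+1))

private noncomputable def kap' (M i : ℕ) : ℝ :=
  (((2*((2:ℝ)*4^(M-1-i)))^(2*M))⁻¹ * (3/4*((2:ℝ)*4^(M-1-i))^2)^(M-1-i)) * ((2:ℝ)*4^(M-1-i))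


private lemma lower_eval (M : ℕ) (hM : 1 ≤ M) (R₁ R₂ : ℝ) (h₁ : 0 < R₁) (h₂ : 0 < R₂) :
    (∏ l : Fin (2*M), ((2 * aSeq M R₁ R₂ (l:ℕ))^(2*M))⁻¹) *
    (∏ j : Fin (2*M), ∏ _k ∈ Finset.Ioi j, ((3:ℝ)/4 * (aSeq M R₁ R₂ (j:ℕ))^2)) *
    (∏ j : Fin (2*M), aSeq M R₁ R₂ (j:ℕ)) =
      ((∏ j ∈ range M, kap M j) * ∏ i ∈ range M, kap' M i) * (R₁*R₂)^(M^2) := by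
  -- collapse inner constant products
  have step1 : ∀ j : Fin (2*M),
      (∏ _k ∈ Finset.Ioi j, ((3:ℝ)/4 * (aSeq M R₁ R₂ (j:ℕ))^2))
        = ((3:ℝ)/4 * (aSeq M R₁ R₂ (j:ℕ))^2)^(2*M-1-(j:ℕ)) := by
    intro j
    rw [Finset.prod_const, Fin.card_Ioi]
  rw [Finset.prod_congr rfl (fun j _ => step1 j), ← Finset.prod_mul_distrib,
    ← Finset.prod_mul_distrib]
  rw [Fin.prod_univ_eq_prod_range
    (fun j => ((2 * aSeq M R₁ R₂ j)^(2*M))⁻¹ * ((3:ℝ)/4 * (aSeq M R₁ R₂ j)^2)^(2*M-1-j)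
      * aSeq M R₁ R₂ j) (2*M)]
  rw [show Finset.range (2*M) = Finset.range (M+M) from by rw [two_mul], Finset.prod_range_add]
  have first : ∀ j ∈ range M,
      ((2 * aSeq M R₁ R₂ j)^(2*M))⁻¹ * ((3:ℝ)/4 * (aSeq M R₁ R₂ j)^2)^(2*M-1-j)
        * aSeq M R₁ R₂ j = kap M j * R₁^(2*(M-1-j)+1) := by
    intro j hj
    rw [Finset.mem_range] at hj
    have ha : aSeq M R₁ R₂ j = R₁ * (4:ℝ)⁻¹^(j+1) := by
      unfold aSeq; rw [if_pos hj]
    rw [ha, kap]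
    exact pow_merge R₁ h₁ (by omega) _
  have second : ∀ i ∈ range M,
      ((2 * aSeq M R₁ R₂ (M+i))^(2*M))⁻¹ * ((3:ℝ)/4 * (aSeq M R₁ R₂ (M+i))^2)^(2*M-1-(M+i))
        * aSeq M R₁ R₂ (M+i) = kap' M i * R₂^(2*i+1) := by
    intro i hi
    rw [Finset.mem_range] at hi
    have ha : aSeq M R₁ R₂ (M+i) = R₂⁻¹ * ((2:ℝ)*4^(M-1-i)) := by
      unfold aSeq
      rw [if_neg (show ¬ (M+i < M) by omega), show 2*M-1-(M+i) = M-1-i from by omega]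
      ring
    have hc : 2*M-1-(M+i) = M-1-i := by omega
    rw [ha, hc, kap']
    exact pow_merge' R₂ h₂ (by omega) _
  rw [Finset.prod_congr rfl first, Finset.prod_congr rfl second,
    Finset.prod_mul_distrib, Finset.prod_mul_distrib,
    Finset.prod_pow_eq_pow_sum, Finset.prod_pow_eq_pow_sum]
  have s2 : ∑ i ∈ range M, (2*i+1) = M^2 := sum_odds2 M
  have s1 : ∑ j ∈ range M, (2*(M-1-j)+1) = M^2 := by
    rw [Finset.sum_range_reflect (fun j => 2*j+1) M]; exact s2
  rw [s1, s2, mul_pow]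
  ring

private lemma kap_pos (M : ℕ) (hM : 1 ≤ M) :
    0 < (∏ j ∈ range M, kap M j) * ∏ i ∈ range M, kap' M i := by
  apply mul_pos <;> (apply Finset.prod_pos; intro j _)
  · unfold kap; positivity
  · unfold kap'; positivity

section integr
variable {n : ℕ}

private lemma measS (n : ℕ) (R₁ R₂ : ℝ) :
    MeasurableSet {σ : Fin n → ℝ | (∀ i, 1 / R₂ < σ i ∧ σ i < R₁) ∧
      ∀ i j : Fin n, i < j → σ j < σ i} := by
  have h1 : MeasurableSet {σ : Fin n → ℝ | ∀ i, 1 / R₂ < σ i ∧ σ i < R₁} := by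
    rw [Set.setOf_forall]
    apply MeasurableSet.iInter
    intro i
    exact (measurableSet_lt measurable_const (measurable_pi_apply i)).inter
      (measurableSet_lt (measurable_pi_apply i) measurable_const)
  have h2 : MeasurableSet {σ : Fin n → ℝ | ∀ i j : Fin n, i < j → σ j < σ i} := by
    rw [Set.setOf_forall]
    apply MeasurableSet.iInter
    intro i
    rw [Set.setOf_forall]
    apply MeasurableSet.iInter
    intro j
    rcases lt_or_ge i j with h | h
    · simp only [h, forall_true_left]
      exact measurableSet_lt (measurable_pi_apply j) (measurable_pi_apply i)
    · have hn : ¬ i < j := not_lt.mpr h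
      simp only [hn, false_implies, Set.setOf_true]
      exact MeasurableSet.univ
  rw [Set.setOf_and]
  exact h1.inter h2

private lemma f_contOn (N : ℕ) (t : Set (Fin n → ℝ)) (ht : ∀ σ ∈ t, ∀ l, σ l ≠ 0) :
    ContinuousOn (fun σ : Fin n → ℝ =>
      (∏ l, ((σ l) ^ N)⁻¹) * ∏ j, ∏ k ∈ Finset.Ioi j, ((σ j) ^ 2 - (σ k) ^ 2)) t := by
  apply ContinuousOn.mul
  · apply continuousOn_finset_prod
    intro l _
    exact ContinuousOn.inv₀ (((continuous_apply l).continuousOn).pow N)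
      (fun σ hσ => pow_ne_zero _ (ht σ hσ l))
  · apply continuousOn_finset_prod
    intro j _
    apply continuousOn_finset_prod
    intro k _
    exact ContinuousOn.sub (((continuous_apply j).continuousOn).pow 2)
      (((continuous_apply k).continuousOn).pow 2)

private lemma g_contOn (N : ℕ) (c : ℕ → ℕ) (t : Set (Fin n → ℝ)) (ht : ∀ σ ∈ t, ∀ l, σ l ≠ 0) :
    ContinuousOn (fun σ : Fin n → ℝ =>
      ∏ j : Fin n, (((σ j) ^ 2) ^ (c (j:ℕ)) * (((σ j)) ^ N)⁻¹)) t := by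
  apply continuousOn_finset_prod
  intro j _
  exact ContinuousOn.mul ((((continuous_apply j).continuousOn).pow 2).pow _)
    (ContinuousOn.inv₀ (((continuous_apply j).continuousOn).pow N)
      (fun σ hσ => pow_ne_zero _ (ht σ hσ j)))

private lemma prod_box (s : Fin n → Set ℝ) (hs : ∀ i, MeasurableSet (s i))
    (h : Fin n → ℝ → ℝ) :
    ∫ σ in Set.pi Set.univ s, ∏ i, h i (σ i) = ∏ i, ∫ x in s i, h i x := by
  rw [← MeasureTheory.integral_indicator (MeasurableSet.univ_pi hs)]
  have key : (Set.pi Set.univ s).indicator (fun σ : Fin n → ℝ => ∏ i, h i (σ i))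
      = fun σ => ∏ i, (s i).indicator (h i) (σ i) := by
    funext σ
    by_cases hσ : σ ∈ Set.pi Set.univ s
    · rw [Set.indicator_of_mem hσ]
      exact Finset.prod_congr rfl fun i _ =>
        (Set.indicator_of_mem (hσ i (Set.mem_univ i)) _).symm
    · rw [Set.indicator_of_notMem hσ]
      simp only [Set.mem_pi, Set.mem_univ, forall_true_left, not_forall] at hσ
      obtain ⟨i, hi⟩ := hσ
      exact (Finset.prod_eq_zero (Finset.mem_univ i)
        (Set.indicator_of_notMem hi _)).symm
  rw [key, MeasureTheory.integral_fintype_prod_volume_eq_prod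
    (f := fun i => (s i).indicator (h i))]
  exact Finset.prod_congr rfl fun i _ =>
    MeasureTheory.integral_indicator (hs i)

private lemma int_1d (m c : ℕ) (a b : ℝ) (ha : 0 < a) (hab : a ≤ b) :
    ∫ x in Set.Icc a b, ((x^2)^c * (x^(2*m))⁻¹)
      = (b^((2*c:ℤ) - (2*m:ℕ) + 1) - a^((2*c:ℤ) - (2*m:ℕ) + 1))/((2*c:ℤ) - (2*m:ℕ) + 1) := by
  rw [MeasureTheory.integral_Icc_eq_integral_Ioc, ← intervalIntegral.integral_of_le hab]
  have h0 : (0:ℝ) ∉ Set.uIcc a b := by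
    rw [Set.uIcc_of_le hab]
    intro h
    exact absurd (Set.mem_Icc.mp h).1 (not_le.mpr ha)
  have hcongr : Set.EqOn (fun x : ℝ => (x^2)^c * (x^(2*m))⁻¹)
      (fun x : ℝ => x^((2*c:ℤ) - (2*m:ℕ))) (Set.uIcc a b) := by
    intro x hx
    have hx0 : x ≠ 0 := fun h => h0 (h ▸ hx)
    simp only
    rw [← pow_mul, ← zpow_natCast x (2*c), ← zpow_natCast x (2*m), ← zpow_neg, ← zpow_add₀ hx0]
    congr 1
  rw [intervalIntegral.integral_congr hcongr]
  rw [integral_zpow (Or.inr ⟨by omega, h0⟩)]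
  norm_cast
end integr
private lemma f_upper (M : ℕ) {R₁ R₂ : ℝ} (h₂ : 0 < R₂) {σ : Fin (2*M) → ℝ}
    (hσ : σ ∈ {σ : Fin (2*M) → ℝ | (∀ i, 1 / R₂ < σ i ∧ σ i < R₁) ∧
      ∀ i j : Fin (2*M), i < j → σ j < σ i}) :
    (∏ l, ((σ l) ^ (2*M))⁻¹) * ∏ j : Fin (2*M), ∏ k ∈ Finset.Ioi j, ((σ j) ^ 2 - (σ k) ^ 2)
      ≤ ∏ j : Fin (2*M), (((σ j)^2)^(2*M-1-(j:ℕ)) * ((σ j)^(2*M))⁻¹) := by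
  obtain ⟨hbox, hord⟩ := hσ
  have hpos : ∀ l, 0 < σ l := fun l => lt_trans (by positivity) (hbox l).1
  rw [Finset.prod_mul_distrib]
  have hconst : ∀ j : Fin (2*M), ((σ j)^2)^(2*M-1-(j:ℕ)) = ∏ _k ∈ Finset.Ioi j, (σ j)^2 := by
    intro j
    rw [Finset.prod_const, Fin.card_Ioi]
  rw [Finset.prod_congr rfl (fun j _ => hconst j), mul_comm]
  apply mul_le_mul_of_nonneg_right
  · apply Finset.prod_le_prod
    · intro j _
      apply Finset.prod_nonneg
      intro k hk
      have hjk : (j:ℕ) < (k:ℕ) := Fin.lt_def.mp (Finset.mem_Ioi.mp hk)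
      have := hpos k
      nlinarith [hord j k (Fin.lt_def.mpr hjk)]
    · intro j _
      apply Finset.prod_le_prod
      · intro k hk
        have := hpos k
        nlinarith [hord j k (Finset.mem_Ioi.mp hk)]
      · intro k _
        nlinarith [sq_nonneg (σ k)]
  · apply Finset.prod_nonneg
    intro l _
    have := hpos l
    positivity

private lemma V_pos_bound (R₁ R₂ : ℝ) (h₁ : 0 < R₁) (h₂ : 0 < R₂) (hQ : 1 ≤ R₁*R₂)
    (e : ℕ) (he : 1 ≤ e) :
    0 ≤ (R₁^((e:ℤ)) - (1/R₂)^((e:ℤ)))/(((e:ℤ)):ℝ) ∧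
      (R₁^((e:ℤ)) - (1/R₂)^((e:ℤ)))/(((e:ℤ)):ℝ) ≤ R₁^e := by
  rw [zpow_natCast, zpow_natCast]
  have hba : 1/R₂ ≤ R₁ := by rw [div_le_iff₀ h₂]; nlinarith
  have h1 : (0:ℝ) < 1/R₂ := by positivity
  have hnum : 0 ≤ R₁^e - (1/R₂)^e :=
    sub_nonneg.mpr (pow_le_pow_left₀ (le_of_lt h1) hba e)
  have he' : (1:ℝ) ≤ ((e:ℤ):ℝ) := by exact_mod_cast he
  constructor
  · exact div_nonneg hnum (by linarith)
  · rw [div_le_iff₀ (by linarith : (0:ℝ) < ((e:ℤ):ℝ))]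
    nlinarith [pow_pos h1 e, pow_nonneg (le_of_lt h₁) e]

private lemma V_neg_bound (R₁ R₂ : ℝ) (h₁ : 0 < R₁) (h₂ : 0 < R₂) (hQ : 1 ≤ R₁*R₂)
    (e : ℕ) (he : 1 ≤ e) :
    0 ≤ (R₁^(-(e:ℤ)) - (1/R₂)^(-(e:ℤ)))/(((-(e:ℤ)):ℤ):ℝ) ∧
      (R₁^(-(e:ℤ)) - (1/R₂)^(-(e:ℤ)))/(((-(e:ℤ)):ℤ):ℝ) ≤ R₂^e := by
  rw [zpow_neg, zpow_neg, zpow_natCast, zpow_natCast, one_div, inv_pow, inv_inv]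
  have he' : (1:ℝ) ≤ (e:ℝ) := by exact_mod_cast he
  have hcast : (((-(e:ℤ)):ℤ):ℝ) = -(e:ℝ) := by push_cast; ring
  rw [hcast]
  have hpow : 1 ≤ R₁^e * R₂^e := by
    rw [← mul_pow]
    exact one_le_pow₀ hQ
  have hinv : R₁^e * (R₁^e)⁻¹ = 1 := mul_inv_cancel₀ (pow_ne_zero e (ne_of_gt h₁))
  have hkey : (R₁^e)⁻¹ ≤ R₂^e := by
    nlinarith [pow_pos h₁ e, pow_pos h₂ e]
  have heq : ((R₁^e)⁻¹ - R₂^e)/(-(e:ℝ)) = (R₂^e - (R₁^e)⁻¹)/(e:ℝ) := by ring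
  rw [heq]
  constructor
  · apply div_nonneg (by linarith) (by linarith)
  · rw [div_le_iff₀ (by linarith : (0:ℝ) < (e:ℝ))]
    have hinvpos : (0:ℝ) < (R₁^e)⁻¹ := by positivity
    nlinarith [pow_pos h₂ e]
private lemma int_1d' (m c : ℕ) (d : ℤ) (hd : d = 2*(c:ℤ) - 2*(m:ℤ) + 1)
    (a b : ℝ) (ha : 0 < a) (hab : a ≤ b) :
    ∫ x in Set.Icc a b, ((x^2)^c * (x^(2*m))⁻¹) = (b^d - a^d)/((d:ℤ):ℝ) := by
  subst hd
  rw [int_1d m c a b ha hab]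
  norm_cast

/-- The volume integral `I_N(R₁,R₂)` over ordered tuples `R₁ > σ₁ > ⋯ > σ_N > 1/R₂`
of `∏ σ_l^{-N} ∏_{j<k} (σ_j² - σ_k²)`. -/
noncomputable def volI (N : ℕ) (R₁ R₂ : ℝ) : ℝ :=
  ∫ σ in {σ : Fin N → ℝ | (∀ i, 1 / R₂ < σ i ∧ σ i < R₁) ∧
      ∀ i j : Fin N, i < j → σ j < σ i},
    (∏ l, ((σ l) ^ N)⁻¹) * ∏ j, ∏ k ∈ Finset.Ioi j, ((σ j) ^ 2 - (σ k) ^ 2)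

theorem stmt1 (N : ℕ) (hN : 2 ≤ N) (heven : Even N) :
    ∃ C₁ C₂ T : ℝ, 0 < C₁ ∧ 0 < C₂ ∧ 1 < T ∧
      ∀ R₁ R₂ : ℝ, 0 < R₁ → 0 < R₂ → T ≤ R₁ * R₂ →
        C₁ ≤ volI N R₁ R₂ / (R₁ * R₂) ^ ((N : ℝ) ^ 2 / 4) ∧
        volI N R₁ R₂ / (R₁ * R₂) ^ ((N : ℝ) ^ 2 / 4) ≤ C₂ := by
  obtain ⟨M, rfl⟩ : ∃ M, N = 2*M := ⟨N/2, by have := Nat.even_iff.mp heven; omega⟩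
  have hM : 1 ≤ M := by omega
  refine ⟨(∏ j ∈ range M, kap M j) * ∏ i ∈ range M, kap' M i, 1, 2*4^(2*M),
    kap_pos M hM, one_pos, ?_, ?_⟩
  · have h4 : (1:ℝ) ≤ 4^(2*M) := one_le_pow₀ (by norm_num)
    linarith
  intro R₁ R₂ h₁ h₂ hT
  have hQ : 2*4^(2*M) ≤ R₁*R₂ := hT
  have h4 : (1:ℝ) ≤ 4^(2*M) := one_le_pow₀ (by norm_num)
  have hQ1 : (1:ℝ) ≤ R₁*R₂ := by linarith
  have hQpos : (0:ℝ) < R₁*R₂ := by positivity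
  have hpow_eq : (R₁*R₂) ^ (((2*M:ℕ):ℝ)^2/4) = (R₁*R₂)^(M^2) := by
    rw [← Real.rpow_natCast (R₁*R₂) (M^2)]
    congr 1
    push_cast
    ring
  have hQMpos : (0:ℝ) < (R₁*R₂)^(M^2) := pow_pos hQpos _
  have hpos2 : (0:ℝ) < 1/R₂ := by positivity
  have hba : 1/R₂ ≤ R₁ := by rw [div_le_iff₀ h₂]; nlinarith
  have hmeasS := measS (2*M) R₁ R₂
  have hSB : {σ : Fin (2*M) → ℝ | (∀ i, 1 / R₂ < σ i ∧ σ i < R₁) ∧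
      ∀ i j : Fin (2*M), i < j → σ j < σ i} ⊆
      Set.pi Set.univ (fun _ : Fin (2*M) => Set.Icc (1/R₂) R₁) := by
    intro σ hσ
    rw [Set.mem_pi]
    intro i _
    exact Set.mem_Icc.mpr ⟨le_of_lt (hσ.1 i).1, le_of_lt (hσ.1 i).2⟩
  have hBne : ∀ σ ∈ Set.pi Set.univ (fun _ : Fin (2*M) => Set.Icc (1/R₂) R₁),
      ∀ l, σ l ≠ 0 := by
    intro σ hσ l
    have := hσ l (Set.mem_univ l)
    exact ne_of_gt (lt_of_lt_of_le hpos2 (Set.mem_Icc.mp this).1)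
  have hBcomp : IsCompact (Set.pi Set.univ (fun _ : Fin (2*M) => Set.Icc (1/R₂) R₁)) :=
    isCompact_univ_pi fun _ => isCompact_Icc
  have hfint_B : IntegrableOn (fun σ : Fin (2*M) → ℝ =>
      (∏ l, ((σ l) ^ (2*M))⁻¹) * ∏ j, ∏ k ∈ Finset.Ioi j, ((σ j) ^ 2 - (σ k) ^ 2))
      (Set.pi Set.univ (fun _ : Fin (2*M) => Set.Icc (1/R₂) R₁)) :=
    (f_contOn (2*M) _ hBne).integrableOn_compact hBcomp
  have hfint_S := hfint_B.mono_set hSB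
  have hf_nonneg : ∀ σ ∈ {σ : Fin (2*M) → ℝ | (∀ i, 1 / R₂ < σ i ∧ σ i < R₁) ∧
      ∀ i j : Fin (2*M), i < j → σ j < σ i},
      0 ≤ (∏ l, ((σ l) ^ (2*M))⁻¹) * ∏ j, ∏ k ∈ Finset.Ioi j, ((σ j) ^ 2 - (σ k) ^ 2) := by
    intro σ hσ
    obtain ⟨hbox, hord⟩ := hσ
    have hpos : ∀ l, 0 < σ l := fun l => lt_trans hpos2 (hbox l).1
    apply mul_nonneg
    · apply Finset.prod_nonneg
      intro l _
      have := hpos l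
      positivity
    · apply Finset.prod_nonneg
      intro j _
      apply Finset.prod_nonneg
      intro k hk
      have := hpos k
      nlinarith [hord j k (Finset.mem_Ioi.mp hk)]
  -- LOWER BOUND
  have hPS := P_subset_S hM h₁ h₂ hQ
  have hPmeas : MeasurableSet (Set.pi Set.univ fun j : Fin (2*M) =>
      Set.Icc (aSeq M R₁ R₂ (j:ℕ)) (2 * aSeq M R₁ R₂ (j:ℕ))) :=
    MeasurableSet.univ_pi fun _ => measurableSet_Icc
  have hPfin : volume (Set.pi Set.univ fun j : Fin (2*M) =>
      Set.Icc (aSeq M R₁ R₂ (j:ℕ)) (2 * aSeq M R₁ R₂ (j:ℕ))) ≠ ⊤ :=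
    ((isCompact_univ_pi fun _ => isCompact_Icc).measure_lt_top).ne
  have hPvol : (volume (Set.pi Set.univ fun j : Fin (2*M) =>
      Set.Icc (aSeq M R₁ R₂ (j:ℕ)) (2 * aSeq M R₁ R₂ (j:ℕ)))).toReal
      = ∏ j : Fin (2*M), aSeq M R₁ R₂ (j:ℕ) := by
    rw [volume_pi_pi, ENNReal.toReal_prod]
    apply Finset.prod_congr rfl
    intro j _
    have ha := aSeq_pos h₁ h₂ (M := M) (j:ℕ)
    rw [Real.volume_Icc, ENNReal.toReal_ofReal (by linarith)]
    ring
  have hlow := setIntegral_ge_of_const_le (μ := volume) hPmeas hPfin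
    (fun σ hσ => f_lower hM h₁ h₂ hQ hσ) (hfint_B.mono_set (hPS.trans hSB))
  have hmono := setIntegral_mono_set hfint_S
    ((ae_restrict_iff' hmeasS).mpr (ae_of_all _ hf_nonneg))
    (HasSubset.Subset.eventuallyLE hPS)
  have heval := lower_eval M hM R₁ R₂ h₁ h₂
  constructor
  · rw [hpow_eq, le_div_iff₀ hQMpos]
    unfold volI
    rw [← heval, ← hPvol]
    exact le_trans (by rw [smul_eq_mul, mul_comm] at hlow; exact hlow) hmono
  · rw [hpow_eq, div_le_iff₀ hQMpos, one_mul]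
    unfold volI
    -- UPPER BOUND
    have hgint_B : IntegrableOn (fun σ : Fin (2*M) → ℝ =>
        ∏ j : Fin (2*M), (((σ j)^2)^(2*M-1-(j:ℕ)) * ((σ j)^(2*M))⁻¹))
        (Set.pi Set.univ (fun _ : Fin (2*M) => Set.Icc (1/R₂) R₁)) :=
      (g_contOn (2*M) (fun j => 2*M-1-j) _ hBne).integrableOn_compact hBcomp
    have hgint_S := hgint_B.mono_set hSB
    have step1 := setIntegral_mono_on hfint_S hgint_S hmeasS
      (fun σ hσ => f_upper M h₂ hσ)
    have hg_nonneg : ∀ σ : Fin (2*M) → ℝ,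
        0 ≤ ∏ j : Fin (2*M), (((σ j)^2)^(2*M-1-(j:ℕ)) * ((σ j)^(2*M))⁻¹) := by
      intro σ
      apply Finset.prod_nonneg
      intro j _
      apply mul_nonneg (by positivity)
      rw [pow_mul]
      positivity
    have step2 := setIntegral_mono_set hgint_B (ae_of_all _ hg_nonneg)
      (HasSubset.Subset.eventuallyLE hSB)
    have step3 : (∫ σ in Set.pi Set.univ (fun _ : Fin (2*M) => Set.Icc (1/R₂) R₁),
        ∏ j : Fin (2*M), (((σ j)^2)^(2*M-1-(j:ℕ)) * ((σ j)^(2*M))⁻¹))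
        = ∏ j : Fin (2*M),
          ∫ x in Set.Icc (1/R₂) R₁, ((x^2)^(2*M-1-(j:ℕ)) * (x^(2*M))⁻¹) :=
      prod_box (fun _ => Set.Icc (1/R₂) R₁) (fun _ => measurableSet_Icc)
        (fun i x => ((x^2)^(2*M-1-(i:ℕ)) * (x^(2*M))⁻¹))
    have step4 : (∏ j : Fin (2*M),
        ∫ x in Set.Icc (1/R₂) R₁, ((x^2)^(2*M-1-(j:ℕ)) * (x^(2*M))⁻¹))
        = ∏ j ∈ range (2*M),
          ∫ x in Set.Icc (1/R₂) R₁, ((x^2)^(2*M-1-j) * (x^(2*M))⁻¹) :=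
      Fin.prod_univ_eq_prod_range
        (fun j => ∫ x in Set.Icc (1/R₂) R₁, ((x^2)^(2*M-1-j) * (x^(2*M))⁻¹)) (2*M)
    have hW1 : ∀ j ∈ range M,
        0 ≤ (∫ x in Set.Icc (1/R₂) R₁, ((x^2)^(2*M-1-j) * (x^(2*M))⁻¹)) ∧
        (∫ x in Set.Icc (1/R₂) R₁, ((x^2)^(2*M-1-j) * (x^(2*M))⁻¹))
          ≤ R₁^(2*(M-1-j)+1) := by
      intro j hj
      rw [Finset.mem_range] at hj
      rw [int_1d' M (2*M-1-j) (((2*(M-1-j)+1 : ℕ)):ℤ) (by omega) (1/R₂) R₁ hpos2 hba]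
      exact V_pos_bound R₁ R₂ h₁ h₂ hQ1 _ (by omega)
    have hW2 : ∀ i ∈ range M,
        0 ≤ (∫ x in Set.Icc (1/R₂) R₁, ((x^2)^(2*M-1-(M+i)) * (x^(2*M))⁻¹)) ∧
        (∫ x in Set.Icc (1/R₂) R₁, ((x^2)^(2*M-1-(M+i)) * (x^(2*M))⁻¹))
          ≤ R₂^(2*i+1) := by
      intro i hi
      rw [Finset.mem_range] at hi
      rw [int_1d' M (2*M-1-(M+i)) (-((2*i+1 : ℕ):ℤ)) (by omega) (1/R₂) R₁ hpos2 hba]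
      exact V_neg_bound R₁ R₂ h₁ h₂ hQ1 _ (by omega)
    have split : (∏ j ∈ range (2*M),
        ∫ x in Set.Icc (1/R₂) R₁, ((x^2)^(2*M-1-j) * (x^(2*M))⁻¹))
        = (∏ j ∈ range M,
            ∫ x in Set.Icc (1/R₂) R₁, ((x^2)^(2*M-1-j) * (x^(2*M))⁻¹)) *
          ∏ i ∈ range M,
            ∫ x in Set.Icc (1/R₂) R₁, ((x^2)^(2*M-1-(M+i)) * (x^(2*M))⁻¹) := by
      rw [show Finset.range (2*M) = Finset.range (M+M) from by rw [two_mul],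
        Finset.prod_range_add]
    have bound1 : (∏ j ∈ range M,
        ∫ x in Set.Icc (1/R₂) R₁, ((x^2)^(2*M-1-j) * (x^(2*M))⁻¹))
        ≤ R₁^(M^2) := by
      have : (∏ j ∈ range M, (R₁^(2*(M-1-j)+1))) = R₁^(M^2) := by
        rw [Finset.prod_pow_eq_pow_sum]
        congr 1
        rw [Finset.sum_range_reflect (fun j => 2*j+1) M]
        exact sum_odds2 M
      rw [← this]
      exact Finset.prod_le_prod (fun j hj => (hW1 j hj).1) (fun j hj => (hW1 j hj).2)
    have bound2 : (∏ i ∈ range M,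
        ∫ x in Set.Icc (1/R₂) R₁, ((x^2)^(2*M-1-(M+i)) * (x^(2*M))⁻¹))
        ≤ R₂^(M^2) := by
      have : (∏ i ∈ range M, (R₂^(2*i+1))) = R₂^(M^2) := by
        rw [Finset.prod_pow_eq_pow_sum, sum_odds2 M]
      rw [← this]
      exact Finset.prod_le_prod (fun i hi => (hW2 i hi).1) (fun i hi => (hW2 i hi).2)
    have nn1 : 0 ≤ (∏ j ∈ range M,
        ∫ x in Set.Icc (1/R₂) R₁, ((x^2)^(2*M-1-j) * (x^(2*M))⁻¹)) :=
      Finset.prod_nonneg (fun j hj => (hW1 j hj).1)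
    have final : (∏ j ∈ range (2*M),
        ∫ x in Set.Icc (1/R₂) R₁, ((x^2)^(2*M-1-j) * (x^(2*M))⁻¹))
        ≤ (R₁*R₂)^(M^2) := by
      rw [split, mul_pow]
      exact mul_le_mul bound1 bound2
        (Finset.prod_nonneg (fun i hi => (hW2 i hi).1)) (by positivity)
    calc (∫ σ in {σ : Fin (2*M) → ℝ | (∀ i, 1 / R₂ < σ i ∧ σ i < R₁) ∧
          ∀ i j : Fin (2*M), i < j → σ j < σ i},
          (∏ l, ((σ l) ^ (2*M))⁻¹) * ∏ j, ∏ k ∈ Finset.Ioi j, ((σ j) ^ 2 - (σ k) ^ 2))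
        ≤ ∫ σ in {σ : Fin (2*M) → ℝ | (∀ i, 1 / R₂ < σ i ∧ σ i < R₁) ∧
          ∀ i j : Fin (2*M), i < j → σ j < σ i},
          ∏ j : Fin (2*M), (((σ j)^2)^(2*M-1-(j:ℕ)) * ((σ j)^(2*M))⁻¹) := step1
      _ ≤ ∫ σ in Set.pi Set.univ (fun _ : Fin (2*M) => Set.Icc (1/R₂) R₁),
          ∏ j : Fin (2*M), (((σ j)^2)^(2*M-1-(j:ℕ)) * ((σ j)^(2*M))⁻¹) := step2
      _ = ∏ j ∈ range (2*M),
          ∫ x in Set.Icc (1/R₂) R₁, ((x^2)^(2*M-1-j) * (x^(2*M))⁻¹) := by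
            rw [step3, step4]
      _ ≤ (R₁*R₂)^(M^2) := final
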